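/- arXiv:2401.11589 — 4 statements merged into one kernel-verified Lean document; each statement's English description precedes it below -/
import Mathlib

section
/- Let α be a rational number, not 0 or ±1 and not a square in ℚ^×, with τ = 1, and let δ be the discriminant of ℚ(√α). Define dens(α) = A(1)·(1 - μ(|δ|)·f_1(δ)) if δ ≡ 1 (mod 4) and dens(α) = A(1) otherwise. Then dens(α)/A(1) ≤ 6/5, with equality for α = -3 (where δ = -3). -/
open ArithmeticFunction

/-- The Artin constant `A(1) = ∏_ℓ (1 - 1/(ℓ(ℓ-1)))`. -/
noncomputable def artinA1 : ℝ :=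
  ∏' p : Nat.Primes, (1 - 1 / (((p : ℕ) : ℝ) * (((p : ℕ) : ℝ) - 1)))

/-- Hooley's correction factor for `τ = 1`. -/
noncomputable def hooleyF1 (δ : ℤ) : ℝ :=
  ∏ ℓ ∈ δ.natAbs.primeFactors, 1 / ((ℓ : ℝ) ^ 2 - ℓ - 1)

/-- Hooley's density for `τ = 1`, as a function of the discriminant `δ`. -/
noncomputable def hooleyDens1 (δ : ℤ) : ℝ :=
  if δ % 4 = 1 then artinA1 * (1 - (moebius δ.natAbs : ℝ) * hooleyF1 δ)
  else artinA1


lemma tprod_nonneg' {ι : Type*} {f : ι → ℝ} (h : ∀ i, 0 ≤ f i) : 0 ≤ ∏' i, f i := by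
  by_cases hm : Multipliable f
  · exact ge_of_tendsto hm.hasProd
      (Filter.Eventually.of_forall fun s => Finset.prod_nonneg fun i _ => h i)
  · rw [tprod_eq_one_of_not_multipliable hm]; norm_num

lemma artinA1_nonneg : 0 ≤ artinA1 := by
  apply tprod_nonneg'
  intro p
  have h2 : (2:ℝ) ≤ (p:ℕ) := by exact_mod_cast p.2.two_le
  have hpos : (0:ℝ) < ((p:ℕ):ℝ) * (((p:ℕ):ℝ) - 1) := by nlinarith
  rw [sub_nonneg, div_le_one hpos]; nlinarith

lemma factor_pos {m ℓ : ℕ} (hℓ : ℓ ∈ m.primeFactors) : (0:ℝ) < (ℓ : ℝ) ^ 2 - ℓ - 1 := by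
  have h2 : (2:ℝ) ≤ ℓ := by exact_mod_cast (Nat.prime_of_mem_primeFactors hℓ).two_le
  nlinarith

lemma hooleyF1_nonneg (δ : ℤ) : 0 ≤ hooleyF1 δ := by
  apply Finset.prod_nonneg
  intro ℓ hℓ
  have := factor_pos hℓ
  positivity

theorem dens_le_six_fifths_A1 (α : ℚ) (δ : ℤ)
    (h0 : α ≠ 0) (h1 : α ≠ 1) (hm1 : α ≠ -1)
    (hτ : ∀ n : ℕ, 2 ≤ n → ¬∃ β : ℚ, β ^ n = α)
    (hsf : Squarefree δ) (hδ : ∃ β : ℚ, α = (δ : ℚ) * β ^ 2) :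
    hooleyDens1 δ ≤ 6 / 5 * artinA1 ∧ hooleyDens1 (-3) = 6 / 5 * artinA1 := by
  have hA1 := artinA1_nonneg
  constructor
  · rw [hooleyDens1]
    split_ifs with h4
    · -- main case
      set m := δ.natAbs with hm
      have hbound : -(1/5 : ℝ) ≤ (moebius m : ℝ) * hooleyF1 δ := by
        by_cases hμ : 0 ≤ (moebius m : ℝ)
        · have := mul_nonneg hμ (hooleyF1_nonneg δ)
          linarith
        · -- μ is negative hence = -1
          have hμval : moebius m = -1 := by
            by_cases hsq : Squarefree m
            · rw [moebius_apply_of_squarefree hsq] at hμ ⊢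
              rcases Nat.even_or_odd (cardFactors m) with he | ho
              · exfalso; rw [he.neg_one_pow] at hμ; norm_num at hμ
              · rw [ho.neg_one_pow]
            · exfalso; rw [moebius_eq_zero_of_not_squarefree hsq] at hμ; norm_num at hμ
          have hm0 : m ≠ 0 := by
            simp only [hm, Int.natAbs_ne_zero]; exact hsf.ne_zero
          have hm1' : m ≠ 1 := by
            intro h; rw [h, moebius_apply_one] at hμval; norm_num at hμval
          obtain ⟨p, hp, hpd⟩ := Nat.exists_prime_and_dvd hm1'
          have hpmem : p ∈ m.primeFactors := Nat.mem_primeFactors.mpr ⟨hp, hpd, hm0⟩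
          -- δ is odd since δ % 4 = 1
          have hodd : ¬ (2 ∣ δ) := by omega
          have hp2 : p ≠ 2 := by
            intro h
            exact hodd (Int.natAbs_dvd_natAbs.mp (by simpa [h] using hpd))
          have hp3 : (3:ℝ) ≤ p := by
            have := hp.two_le
            have : 3 ≤ p := by omega
            exact_mod_cast this
          have hF : hooleyF1 δ ≤ 1/5 := by
            rw [hooleyF1, ← Finset.mul_prod_erase _ _ hpmem]
            have h1 : 1 / ((p:ℝ)^2 - p - 1) ≤ 1/5 := by
              rw [div_le_div_iff₀ (by nlinarith) (by norm_num)]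
              nlinarith
            have h2 : ∏ ℓ ∈ (m.primeFactors.erase p), 1 / ((ℓ : ℝ) ^ 2 - ℓ - 1) ≤ 1 := by
              apply Finset.prod_le_one
              · intro ℓ hℓ
                have := factor_pos (Finset.mem_of_mem_erase hℓ)
                positivity
              · intro ℓ hℓ
                have hℓm := Finset.mem_of_mem_erase hℓ
                have h2' : (2:ℝ) ≤ ℓ := by
                  exact_mod_cast (Nat.prime_of_mem_primeFactors hℓm).two_le
                rw [div_le_one (factor_pos hℓm)]; nlinarith
            have h3 : 0 ≤ ∏ ℓ ∈ (m.primeFactors.erase p), 1 / ((ℓ : ℝ) ^ 2 - ℓ - 1) := by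
              apply Finset.prod_nonneg
              intro ℓ hℓ
              have := factor_pos (Finset.mem_of_mem_erase hℓ)
              positivity
            have hppos : (0:ℝ) < (p:ℝ)^2 - p - 1 := by nlinarith
            have h0' : 0 ≤ 1 / ((p:ℝ)^2 - p - 1) := by positivity
            calc (1 / ((p:ℝ)^2 - p - 1)) * ∏ ℓ ∈ (m.primeFactors.erase p), 1 / ((ℓ : ℝ) ^ 2 - ℓ - 1)
                ≤ (1/5) * 1 := mul_le_mul h1 h2 h3 (by norm_num)
              _ = 1/5 := by norm_num
          rw [hμval]
          push_cast
          linarith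
      nlinarith
    · linarith
  · rw [hooleyDens1]
    have : ((-3 : ℤ)) % 4 = 1 := by decide
    rw [if_pos this]
    have hna : (-3 : ℤ).natAbs = 3 := by decide
    rw [hna, moebius_apply_prime Nat.prime_three, hooleyF1, hna,
      Nat.Prime.primeFactors Nat.prime_three]
    norm_num
    ring
end

section
/- Let α ∈ ℚ \ {0, ±1} be not a square, τ the largest integer with α ∈ (ℚ^×)^τ, and δ the discriminant of ℚ(√α). Define dens(α) = A(τ)·(1 - μ(|δ|)·f_τ(δ)) if δ ≡ 1 (mod 4) and dens(α) = A(τ) otherwise. Then 2/3 ≤ dens(α)/A(τ) ≤ 2 whenever A(τ) ≠ 0, and both bounds are attained (at α = (-15)^15 and α = (-3)^3 respectively). -/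
open ArithmeticFunction

/-- The Artin constant `A(τ)`. -/
noncomputable def artinA (τ : ℕ) : ℝ :=
  ∏' p : Nat.Primes,
    if (p : ℕ) ∣ τ then (1 - 1 / (((p : ℕ) : ℝ) - 1))
    else (1 - 1 / (((p : ℕ) : ℝ) * (((p : ℕ) : ℝ) - 1)))

/-- Hooley's correction factor `f_τ(δ)`. -/
noncomputable def hooleyF (τ : ℕ) (δ : ℤ) : ℝ :=
  ∏ ℓ ∈ δ.natAbs.primeFactors,
    if ℓ ∣ τ then 1 / ((ℓ : ℝ) - 2) else 1 / ((ℓ : ℝ) ^ 2 - ℓ - 1)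

/-- Hooley's density, as a function of `τ` and the discriminant `δ`. -/
noncomputable def hooleyDens (τ : ℕ) (δ : ℤ) : ℝ :=
  if δ % 4 = 1 then artinA τ * (1 - (moebius δ.natAbs : ℝ) * hooleyF τ δ)
  else artinA τ

/- ### Auxiliary lemmas -/

lemma term_nonneg (τ ℓ : ℕ) (hℓ : 2 ≤ ℓ) :
    0 ≤ (if ℓ ∣ τ then 1 / ((ℓ : ℝ) - 2) else 1 / ((ℓ : ℝ) ^ 2 - ℓ - 1)) := by
  have h : (2:ℝ) ≤ (ℓ:ℝ) := by exact_mod_cast hℓ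
  split
  · exact one_div_nonneg.mpr (by linarith)
  · exact one_div_nonneg.mpr (by nlinarith)

lemma term_le_one (τ ℓ : ℕ) (hℓ : 2 ≤ ℓ) :
    (if ℓ ∣ τ then 1 / ((ℓ : ℝ) - 2) else 1 / ((ℓ : ℝ) ^ 2 - ℓ - 1)) ≤ 1 := by
  have h : (2:ℝ) ≤ (ℓ:ℝ) := by exact_mod_cast hℓ
  split
  · rcases eq_or_lt_of_le hℓ with h2 | h3
    · rw [← h2]; norm_num
    · have h3' : (3:ℝ) ≤ (ℓ:ℝ) := by exact_mod_cast h3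
      rw [div_le_one (by linarith)]; linarith
  · rw [div_le_one (by nlinarith)]; nlinarith

lemma term_le_third (τ ℓ : ℕ) (hℓ : 5 ≤ ℓ) :
    (if ℓ ∣ τ then 1 / ((ℓ : ℝ) - 2) else 1 / ((ℓ : ℝ) ^ 2 - ℓ - 1)) ≤ 1/3 := by
  have h : (5:ℝ) ≤ (ℓ:ℝ) := by exact_mod_cast hℓ
  split
  · rw [div_le_div_iff₀ (by linarith) (by norm_num)]; linarith
  · rw [div_le_div_iff₀ (by nlinarith) (by norm_num)]; nlinarith

lemma hooleyF_nonneg (τ : ℕ) (δ : ℤ) : 0 ≤ hooleyF τ δ := by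
  refine Finset.prod_nonneg fun ℓ hℓ => ?_
  exact term_nonneg τ ℓ (Nat.prime_of_mem_primeFactors hℓ).two_le

lemma hooleyF_le_one (τ : ℕ) (δ : ℤ) : hooleyF τ δ ≤ 1 := by
  refine Finset.prod_le_one (fun ℓ hℓ => term_nonneg τ ℓ (Nat.prime_of_mem_primeFactors hℓ).two_le)
    (fun ℓ hℓ => term_le_one τ ℓ (Nat.prime_of_mem_primeFactors hℓ).two_le)

lemma hooleyF_le_third (τ : ℕ) (δ : ℤ) (hodd : ¬ (2:ℤ) ∣ δ)
    (hcard : 2 ≤ δ.natAbs.primeFactors.card) : hooleyF τ δ ≤ 1/3 := by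
  obtain ⟨p, hp, q, hq, hpq⟩ := Finset.one_lt_card.mp hcard
  have key : ∃ r ∈ δ.natAbs.primeFactors, r ≠ 3 := by
    by_cases h : p = 3
    · exact ⟨q, hq, by rw [← h]; exact fun e => hpq e.symm⟩
    · exact ⟨p, hp, h⟩
  obtain ⟨r, hr, hr3⟩ := key
  have hrp : r.Prime := Nat.prime_of_mem_primeFactors hr
  have hr2 : r ≠ 2 := by
    rintro rfl
    exact hodd (Int.natAbs_dvd_natAbs.mp (by simpa using Nat.dvd_of_mem_primeFactors hr))
  have hr4 : r ≠ 4 := by rintro rfl; norm_num at hrp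
  have hr5 : 5 ≤ r := by have := hrp.two_le; omega
  rw [hooleyF, ← Finset.mul_prod_erase _ _ hr]
  have h1 := term_le_third τ r hr5
  have h0 := term_nonneg τ r hrp.two_le
  have h2 : (∏ ℓ ∈ δ.natAbs.primeFactors.erase r,
      (if ℓ ∣ τ then 1 / ((ℓ : ℝ) - 2) else 1 / ((ℓ : ℝ) ^ 2 - ℓ - 1))) ≤ 1 := by
    refine Finset.prod_le_one (fun ℓ hℓ => term_nonneg τ ℓ
      (Nat.prime_of_mem_primeFactors (Finset.mem_of_mem_erase hℓ)).two_le)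
      (fun ℓ hℓ => term_le_one τ ℓ
      (Nat.prime_of_mem_primeFactors (Finset.mem_of_mem_erase hℓ)).two_le)
  have h3 : (0:ℝ) ≤ ∏ ℓ ∈ δ.natAbs.primeFactors.erase r,
      (if ℓ ∣ τ then 1 / ((ℓ : ℝ) - 2) else 1 / ((ℓ : ℝ) ^ 2 - ℓ - 1)) := by
    refine Finset.prod_nonneg fun ℓ hℓ => term_nonneg τ ℓ
      (Nat.prime_of_mem_primeFactors (Finset.mem_of_mem_erase hℓ)).two_le
  calc _ ≤ (1/3 : ℝ) * 1 := by
        apply mul_le_mul h1 h2 h3 (by norm_num)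
    _ = 1/3 := by norm_num

open Real in
lemma artinA_pos (τ : ℕ) (h2 : ¬ 2 ∣ τ) (h0 : τ ≠ 0) : 0 < artinA τ := by
  classical
  set g : Nat.Primes → ℝ := fun p =>
    if (p : ℕ) ∣ τ then (1 - 1 / (((p : ℕ) : ℝ) - 1))
    else (1 - 1 / (((p : ℕ) : ℝ) * (((p : ℕ) : ℝ) - 1))) with hgdef
  have hB : ∀ p : Nat.Primes, (1:ℝ)/2 ≤ g p ∧ g p ≤ 1 := by
    intro p
    have hp2 : (2:ℝ) ≤ ((p:ℕ):ℝ) := by exact_mod_cast p.2.two_le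
    by_cases hd : (p:ℕ) ∣ τ
    · have hne : (p:ℕ) ≠ 2 := by rintro h; exact h2 (h ▸ hd)
      have hp3 : (3:ℝ) ≤ ((p:ℕ):ℝ) := by
        have : 3 ≤ (p:ℕ) := by have := p.2.two_le; omega
        exact_mod_cast this
      have hx : (0:ℝ) < ((p:ℕ):ℝ) - 1 := by linarith
      have h1 : 1 / (((p:ℕ):ℝ) - 1) ≤ 1/2 := by
        rw [div_le_div_iff₀ hx (by norm_num)]; linarith
      have h2' : (0:ℝ) ≤ 1 / (((p:ℕ):ℝ) - 1) := by positivity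
      simp only [hgdef, if_pos hd]
      constructor <;> linarith
    · have hx : (2:ℝ) ≤ ((p:ℕ):ℝ) * (((p:ℕ):ℝ) - 1) := by nlinarith
      have h1 : 1 / (((p:ℕ):ℝ) * (((p:ℕ):ℝ) - 1)) ≤ 1/2 := by
        rw [div_le_div_iff₀ (by linarith) (by norm_num)]; linarith
      have h2' : (0:ℝ) ≤ 1 / (((p:ℕ):ℝ) * (((p:ℕ):ℝ) - 1)) := by positivity
      simp only [hgdef, if_neg hd]
      constructor <;> linarith
  have hgpos : ∀ p, 0 < g p := fun p => lt_of_lt_of_le (by norm_num) (hB p).1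
  have hsum : Summable fun p : Nat.Primes => Real.log (g p) := by
    have hS : Summable fun p : Nat.Primes => 4 / ((p:ℕ):ℝ)^2 := by
      have h1 : Summable (fun p : Nat.Primes => ((p:ℕ):ℝ) ^ (-2 : ℝ)) :=
        Nat.Primes.summable_rpow.mpr (by norm_num)
      refine (h1.mul_left 4).congr fun p => ?_
      have hp0 : (0:ℝ) < ((p:ℕ):ℝ) := by
        have := p.2.two_le; positivity
      rw [show ((p:ℕ):ℝ) ^ (-2 : ℝ) = (((p:ℕ):ℝ)^2)⁻¹ by
        rw [Real.rpow_neg hp0.le, show ((2:ℝ) = ((2:ℕ):ℝ)) by norm_num, Real.rpow_natCast]]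
      rw [div_eq_mul_inv]
    refine Summable.of_norm_bounded_eventually hS ?_
    rw [Filter.eventually_cofinite]
    have hfin : {p : Nat.Primes | (p:ℕ) ∣ τ}.Finite := by
      have hsub : {p : Nat.Primes | (p:ℕ) ∣ τ} ⊆
          (fun p : Nat.Primes => (p:ℕ)) ⁻¹' (Set.Iic τ) := by
        intro p hp; exact Nat.le_of_dvd (Nat.pos_of_ne_zero h0) hp
      exact Set.Finite.subset ((Set.finite_Iic τ).preimage
        (Set.injOn_of_injective Nat.Primes.coe_nat_injective)) hsub
    refine hfin.subset ?_
    intro p hp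
    by_contra hd
    apply hp
    have hp2 : (2:ℝ) ≤ ((p:ℕ):ℝ) := by exact_mod_cast p.2.two_le
    set x : ℝ := ((p:ℕ):ℝ) with hxdef
    have hq2 : (2:ℝ) ≤ x * (x-1) := by nlinarith
    have hy0 : (0:ℝ) < 1/(x*(x-1)) := by positivity
    have hy : 1/(x*(x-1)) ≤ 1/2 := by
      rw [div_le_div_iff₀ (by linarith) (by norm_num)]; linarith
    set y : ℝ := 1/(x*(x-1)) with hydef
    have hd' : ¬ ((p:ℕ) ∣ τ) := hd
    have hgp : g p = 1 - y := by simp only [g, if_neg hd']; rfl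
    have h1y : (0:ℝ) < 1 - y := by linarith
    have hle : Real.log (1 - y) ≤ 0 := Real.log_nonpos (by linarith) (by linarith)
    have e1 : ‖Real.log (g p)‖ = - Real.log (1-y) := by
      rw [hgp, Real.norm_eq_abs, abs_of_nonpos hle]
    have h3 : Real.log ((1-y)⁻¹) ≤ (1-y)⁻¹ - 1 :=
      Real.log_le_sub_one_of_pos (by positivity)
    have h4 : (1-y)⁻¹ ≤ 1 + 2*y := by
      rw [inv_eq_one_div, div_le_iff₀ h1y]; nlinarith
    have h5 : 2*y ≤ 4/x^2 := by
      rw [hydef, mul_one_div, div_le_div_iff₀ (by nlinarith) (by positivity)]; nlinarith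
    rw [e1, ← Real.log_inv]
    linarith
  have hprod : HasProd g (Real.exp (∑' p, Real.log (g p))) := by
    have h := hsum.hasSum.rexp
    have e : (Real.exp ∘ fun p => Real.log (g p)) = g :=
      funext fun p => Real.exp_log (hgpos p)
    rwa [e] at h
  have : artinA τ = Real.exp (∑' p, Real.log (g p)) := hprod.tprod_eq
  rw [this]
  exact Real.exp_pos _

lemma pf15 : (15:ℕ).primeFactors = {3,5} := by
  rw [show (15:ℕ) = 3*5 from rfl, Nat.primeFactors_mul (by norm_num) (by norm_num),
    Nat.Prime.primeFactors (by norm_num), Nat.Prime.primeFactors (by norm_num)]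
  rfl

lemma mu15 : (moebius 15 : ℤ) = 1 := by
  rw [show (15:ℕ) = 3*5 from rfl, isMultiplicative_moebius.map_mul_of_coprime (by norm_num),
    moebius_apply_prime (by norm_num), moebius_apply_prime (by norm_num)]
  norm_num

lemma mu3 : (moebius 3 : ℤ) = -1 := moebius_apply_prime (by norm_num)

lemma f15 : hooleyF 15 (-15) = 1/3 := by
  rw [hooleyF, show ((-15:ℤ)).natAbs = 15 from rfl, pf15]
  rw [Finset.prod_insert (by norm_num), Finset.prod_singleton]
  norm_num

lemma f3 : hooleyF 3 (-3) = 1 := by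
  rw [hooleyF, show ((-3:ℤ)).natAbs = 3 from rfl,
    Nat.Prime.primeFactors (by norm_num), Finset.prod_singleton]
  norm_num

theorem dens_ratio_bounds (α : ℚ) (τ : ℕ) (δ : ℤ)
    (h0 : α ≠ 0) (h1 : α ≠ 1) (hm1 : α ≠ -1)
    (hsq : ¬∃ β : ℚ, β ^ 2 = α)
    (hτ : (∃ β : ℚ, β ^ τ = α) ∧ ∀ n : ℕ, (∃ β : ℚ, β ^ n = α) → n ≤ τ)
    (hsf : Squarefree δ) (hδ : ∃ β : ℚ, α = (δ : ℚ) * β ^ 2)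
    (hA : artinA τ ≠ 0) :
    (2 / 3 ≤ hooleyDens τ δ / artinA τ ∧ hooleyDens τ δ / artinA τ ≤ 2) ∧
    hooleyDens 15 (-15) / artinA 15 = 2 / 3 ∧
    hooleyDens 3 (-3) / artinA 3 = 2 := by
  have hA15 : artinA 15 ≠ 0 := ne_of_gt (artinA_pos 15 (by norm_num) (by norm_num))
  have hA3 : artinA 3 ≠ 0 := ne_of_gt (artinA_pos 3 (by norm_num) (by norm_num))
  refine ⟨?_, ?_, ?_⟩
  · -- main bounds
    obtain ⟨β, hβ⟩ := hδ
    have hδ1 : δ ≠ 1 := by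
      rintro rfl
      exact hsq ⟨β, by rw [hβ]; push_cast; ring⟩
    by_cases h4 : δ % 4 = 1
    · have hodd : ¬ (2:ℤ) ∣ δ := by omega
      have hδ0 : δ ≠ 0 := hsf.ne_zero
      have hsfn : Squarefree δ.natAbs := by
        rwa [Int.squarefree_natAbs]
      have hF0 := hooleyF_nonneg τ δ
      have hF1 := hooleyF_le_one τ δ
      rw [hooleyDens, if_pos h4, mul_div_cancel_left₀ _ hA]
      have hμ : (moebius δ.natAbs : ℤ) = (-1)^(cardFactors δ.natAbs) :=
        moebius_apply_of_squarefree hsfn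
      rcases Nat.even_or_odd (cardFactors δ.natAbs) with he | ho
      · have hμ1 : ((moebius δ.natAbs : ℤ) : ℝ) = 1 := by
          rw [hμ, he.neg_one_pow]; norm_num
        have hn0 : δ.natAbs ≠ 0 := Int.natAbs_ne_zero.mpr hδ0
        have hn1 : δ.natAbs ≠ 1 := by
          intro h
          rcases Int.natAbs_eq_iff.mp h with h' | h'
          · exact hδ1 (by exact_mod_cast h')
          · rw [show ((1:ℕ):ℤ) = 1 from rfl] at h'; omega
        have hΩpos : cardFactors δ.natAbs ≠ 0 := by
          intro h
          rw [cardFactors_apply, List.length_eq_zero_iff] at h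
          rcases (Nat.primeFactorsList_eq_nil _).mp h with h' | h' <;> [exact hn0 h'; exact hn1 h']
        have hΩ2 : 2 ≤ cardFactors δ.natAbs := by
          rcases he with ⟨k, hk⟩; omega
        have hcard : 2 ≤ δ.natAbs.primeFactors.card := by
          have hω : (cardDistinctFactors δ.natAbs) = cardFactors δ.natAbs :=
            (cardDistinctFactors_eq_cardFactors_iff_squarefree hn0).mpr hsfn
          have : δ.natAbs.primeFactors.card = cardDistinctFactors δ.natAbs := by
            rw [cardDistinctFactors_apply, Nat.primeFactors, List.card_toFinset]
          omega
        have hf3 := hooleyF_le_third τ δ hodd hcard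
        rw [hμ1]
        constructor <;> linarith
      · have hμ1 : ((moebius δ.natAbs : ℤ) : ℝ) = -1 := by
          rw [hμ, ho.neg_one_pow]; norm_num
        rw [hμ1]
        constructor <;> linarith
    · rw [hooleyDens, if_neg h4, div_self hA]
      norm_num
  · rw [hooleyDens, if_pos (by decide), show ((-15:ℤ)).natAbs = 15 from rfl, f15]
    have h : ((moebius 15 : ℤ) : ℝ) = 1 := by rw [mu15]; norm_num
    rw [h, mul_div_cancel_left₀ _ hA15]
    norm_num
  · rw [hooleyDens, if_pos (by decide), show ((-3:ℤ)).natAbs = 3 from rfl, f3]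
    have h : ((moebius 3 : ℤ) : ℝ) = -1 := by rw [mu3]; norm_num
    rw [h, mul_div_cancel_left₀ _ hA3]
    norm_num
end

section
/- Let K be a number field, ℓ an odd prime with ζ_ℓ ∉ K and [K(ζ_ℓ) : K] = ℓ - 1, and G ≤ K^× a finitely generated torsion-free subgroup. Let r_ℓ be the rank of G/(G ∩ (K^×)^ℓ). Then the rank of G/(G ∩ (K(ζ_ℓ)^×)^ℓ) equals r_ℓ, and hence [K(ζ_ℓ, G^{1/ℓ}) : K] = ℓ^{r_ℓ}(ℓ-1). -/
open IntermediateField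

/-- The `ℓ`-th cyclotomic extension `K(ζ_ℓ)` of `K` inside an algebraic closure. -/
noncomputable def cycField (K : Type*) [Field K] (ℓ : ℕ) :
    IntermediateField K (AlgebraicClosure K) :=
  IntermediateField.adjoin K {x : AlgebraicClosure K | x ^ ℓ = 1}

/-- The cyclotomic-Kummer extension `K(ζ_ℓ, G^{1/ℓ})` of `K`. -/
noncomputable def cycKummerField (K : Type*) [Field K] (ℓ : ℕ) (G : Subgroup Kˣ) :
    IntermediateField K (AlgebraicClosure K) :=
  IntermediateField.adjoin K
    {x : AlgebraicClosure K |
      x ^ ℓ = 1 ∨ ∃ g ∈ G, x ^ ℓ = algebraMap K (AlgebraicClosure K) (g : K)}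

/-- The subgroup of `ℓ`-th powers `(F^×)^ℓ` of the unit group of a field `F`. -/
def powSubgroup (F : Type*) [Field F] (ℓ : ℕ) : Subgroup Fˣ :=
  (powMonoidHom ℓ : Fˣ →* Fˣ).range

section Helpers

open Polynomial

variable {F Ω : Type*} [Field F] [Field Ω] [Algebra F Ω]

lemma aux_root_of_unity {ℓ : ℕ} [NeZero ℓ] {ζ : F} (hζ : IsPrimitiveRoot ζ ℓ)
    {z : Ω} (hz : z ^ ℓ = 1) : ∃ j : ℕ, z = algebraMap F Ω (ζ ^ j) := by
  obtain ⟨j, -, hj⟩ := (hζ.map_of_injective (algebraMap F Ω).injective).eq_pow_of_pow_eq_one hz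
  exact ⟨j, by rw [map_pow, hj]⟩

def rootSubgroup (ℓ : ℕ) (E : IntermediateField F Ω) : Subgroup Fˣ where
  carrier := {u : Fˣ | ∃ y ∈ E, y ^ ℓ = algebraMap F Ω (u : F)}
  one_mem' := ⟨1, E.one_mem, by simp⟩
  mul_mem' := by
    rintro u v ⟨y, hy, hy2⟩ ⟨z, hz, hz2⟩
    exact ⟨y * z, E.mul_mem hy hz, by rw [mul_pow, hy2, hz2, ← map_mul, Units.val_mul]⟩
  inv_mem' := by
    rintro u ⟨y, hy, hy2⟩
    refine ⟨y⁻¹, E.inv_mem hy, ?_⟩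
    rw [inv_pow, hy2, ← map_inv₀, Units.val_inv_eq_inv_val]

lemma mem_rootSubgroup_iff {ℓ : ℕ} {E : IntermediateField F Ω} {u : Fˣ} :
    u ∈ rootSubgroup ℓ E ↔ ∃ y ∈ E, y ^ ℓ = algebraMap F Ω (u : F) := Iff.rfl

lemma pow_le_rootSubgroup (ℓ : ℕ) (E : IntermediateField F Ω) :
    powSubgroup F ℓ ≤ rootSubgroup ℓ E := by
  rintro u ⟨v, rfl⟩
  refine ⟨algebraMap F Ω (v : F), E.algebraMap_mem _, ?_⟩
  rw [← map_pow]
  simp [powMonoidHom]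

set_option maxHeartbeats 1000000 in
lemma kummer_induction {ℓ : ℕ} (hℓ : ℓ.Prime) {ζ : F} (hζ : IsPrimitiveRoot ζ ℓ) :
    ∀ (n : ℕ) (a : Fin n → Fˣ) (b : Fin n → Ω),
      (∀ i, b i ^ ℓ = algebraMap F Ω ((a i : F))) →
      FiniteDimensional F (adjoin F (Set.range b)) ∧
      Module.finrank F (adjoin F (Set.range b))
        = (powSubgroup F ℓ).relIndex (Subgroup.closure (Set.range a) ⊔ powSubgroup F ℓ) ∧
      ∀ (x : Ω) (c : Fˣ), x ∈ adjoin F (Set.range b) → x ^ ℓ = algebraMap F Ω (c : F) →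
        c ∈ Subgroup.closure (Set.range a) ⊔ powSubgroup F ℓ := by
  haveI : NeZero ℓ := ⟨hℓ.ne_zero⟩
  intro n
  induction n with
  | zero =>
    intro a b _
    rw [Set.range_eq_empty a, Set.range_eq_empty b, IntermediateField.adjoin_empty,
      Subgroup.closure_empty, bot_sup_eq]
    refine ⟨inferInstance, ?_, ?_⟩
    · rw [IntermediateField.finrank_bot, Subgroup.relIndex_self]
    · intro x c hx hxc
      rw [IntermediateField.mem_bot] at hx
      obtain ⟨y, rfl⟩ := hx
      have hyc : y ^ ℓ = (c : F) := (algebraMap F Ω).injective (by rw [map_pow, hxc])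
      have hy : y ≠ 0 := by
        rintro rfl
        rw [zero_pow hℓ.ne_zero] at hyc
        exact c.ne_zero hyc.symm
      exact ⟨Units.mk0 y hy, Units.ext (by simpa [powMonoidHom] using hyc)⟩
  | succ n IH =>
    intro a b hab
    set a' : Fin n → Fˣ := Fin.tail a with ha'
    set b' : Fin n → Ω := Fin.tail b with hb'
    obtain ⟨fd, hdim, hcl⟩ := IH a' b' (fun i => hab i.succ)
    set E := adjoin F (Set.range b') with hE
    set H := Subgroup.closure (Set.range a') ⊔ powSubgroup F ℓ with hH
    set P := powSubgroup F ℓ with hP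
    have hPle : P ≤ H := le_sup_right
    have hrange_b : Set.range b = Set.range b' ∪ {b 0} := by
      rw [Fin.range_fin_succ, Set.insert_eq, Set.union_comm]
    have hrange_a : Set.range a = Set.range a' ∪ {a 0} := by
      rw [Fin.range_fin_succ, Set.insert_eq, Set.union_comm]
    have hHtot : Subgroup.closure (Set.range a) ⊔ P
        = H ⊔ Subgroup.zpowers (a 0) := by
      rw [hrange_a, Subgroup.closure_union, ← Subgroup.zpowers_eq_closure, hH]
      exact sup_right_comm _ _ _
    have hEtop : adjoin F (Set.range b) = restrictScalars F (adjoin E (({b 0} : Set Ω))) := by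
      rw [hE, adjoin_adjoin_left, ← hrange_b]
    have hHroot : H ≤ rootSubgroup ℓ E := by
      rw [hH]
      refine sup_le ?_ (pow_le_rootSubgroup ℓ E)
      rw [Subgroup.closure_le]
      rintro u ⟨i, rfl⟩
      exact ⟨b' i, subset_adjoin F _ ⟨i, rfl⟩, hab i.succ⟩
    have ha0ne : algebraMap F Ω ((a 0 : F)) ≠ 0 := by
      simpa using (a 0).ne_zero
    by_cases hmem : a 0 ∈ H
    · obtain ⟨y, hyE, hy⟩ := hHroot hmem
      have hy0 : y ≠ 0 := by
        rintro rfl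
        rw [zero_pow hℓ.ne_zero] at hy
        exact ha0ne hy.symm
      have hb0 : b 0 ∈ E := by
        have hzpow : (b 0 / y) ^ ℓ = 1 := by rw [div_pow, hab 0, hy, div_self ha0ne]
        obtain ⟨j, hj⟩ := aux_root_of_unity hζ hzpow
        have hb0eq : b 0 = y * algebraMap F Ω (ζ ^ j) := by
          rw [← hj, mul_div_cancel₀ _ hy0]
        rw [hb0eq]
        exact E.mul_mem hyE (E.algebraMap_mem _)
      have hEeq : adjoin F (Set.range b) = E := by
        apply le_antisymm
        · rw [adjoin_le_iff, hrange_b]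
          exact Set.union_subset (subset_adjoin F _) (by simpa using hb0)
        · exact IntermediateField.adjoin.mono _ _ _ (by rw [hrange_b]; exact Set.subset_union_left)
      have hHeq : Subgroup.closure (Set.range a) ⊔ P = H := by
        rw [hHtot]
        exact sup_of_le_left (Subgroup.zpowers_le.mpr hmem)
      rw [hEeq, hHeq]
      exact ⟨fd, hdim, hcl⟩
    · -- Case B : a 0 ∉ H
      classical
      set a0E : E := algebraMap F E ((a 0 : F)) with ha0E
      have ha0EΩ : algebraMap E Ω a0E = algebraMap F Ω ((a 0 : F)) :=
        (IsScalarTower.algebraMap_apply F E Ω _).symm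
      have ha0Ene : a0E ≠ 0 := by
        intro h
        apply ha0ne
        rw [← ha0EΩ, h, map_zero]
      have hcoe : ∀ y : E, (y : Ω) = algebraMap E Ω y := fun y => rfl
      have hPneE : ∀ y : E, y ^ ℓ ≠ a0E := by
        intro y hy
        apply hmem
        apply hcl (y : Ω) (a 0) y.2
        rw [hcoe y, ← map_pow, hy, ha0EΩ]
      have hirr : Irreducible (X ^ ℓ - C a0E) := X_pow_sub_C_irreducible_of_prime hℓ hPneE
      have hb0l : (b 0) ^ ℓ = algebraMap E Ω a0E := by rw [ha0EΩ]; exact hab 0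
      have hint : IsIntegral E (b 0) :=
        ⟨X ^ ℓ - C a0E, monic_X_pow_sub_C _ hℓ.ne_zero, by simp [hb0l]⟩
      haveI hfde : FiniteDimensional E E⟮b 0⟯ := IntermediateField.adjoin.finiteDimensional hint
      have hminpoly : minpoly E (b 0) = X ^ ℓ - C a0E := by
        symm
        refine minpoly.eq_of_irreducible_of_monic hirr ?_ (monic_X_pow_sub_C _ hℓ.ne_zero)
        simp [hb0l]
      have hfr : Module.finrank E E⟮b 0⟯ = ℓ := by
        rw [IntermediateField.adjoin.finrank hint, hminpoly]
        exact natDegree_X_pow_sub_C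
      set θ : E⟮b 0⟯ := AdjoinSimple.gen E (b 0) with hθdef
      have hθΩ : algebraMap E⟮b 0⟯ Ω θ = b 0 := AdjoinSimple.algebraMap_gen E (b 0)
      have hθpow : θ ^ ℓ = algebraMap E E⟮b 0⟯ a0E := by
        apply (algebraMap E⟮b 0⟯ Ω).injective
        rw [map_pow, hθΩ, hb0l, ← IsScalarTower.algebraMap_apply (↥E) (↥(E⟮b 0⟯)) Ω]
      have hζE : IsPrimitiveRoot (algebraMap F E ζ) ℓ :=
        hζ.map_of_injective (algebraMap F E).injective
      have hprim : (primitiveRoots ℓ E).Nonempty :=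
        ⟨algebraMap F E ζ, (mem_primitiveRoots hℓ.pos).mpr hζE⟩
      have hgen_top : E⟮θ⟯ = ⊤ := by
        apply IntermediateField.lift_injective
        rw [IntermediateField.lift_adjoin_simple, IntermediateField.lift_top]
        rw [show (θ : Ω) = b 0 from hθΩ]
      haveI hsplit : IsSplittingField E E⟮b 0⟯ (X ^ ℓ - C a0E) := by
        have h1 : θ ^ (Module.finrank E E⟮b 0⟯) = algebraMap E E⟮b 0⟯ a0E := by
          rw [hfr]; exact hθpow
        have hprim' := hprim
        rw [← hfr] at hprim'
        have h2 := isSplittingField_X_pow_sub_C_of_root_adjoin_eq_top hprim' h1 hgen_top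
        rwa [hfr] at h2
      haveI hgal : IsGalois E E⟮b 0⟯ :=
        isGalois_of_isSplittingField_X_pow_sub_C hprim hirr (↥(E⟮b 0⟯))
      -- index computation
      have hidx1 : H.relIndex (H ⊔ Subgroup.zpowers (a 0)) = ℓ := by
        rw [Subgroup.relIndex_sup_left]
        show Nat.card (↥(Subgroup.zpowers (a 0)) ⧸ H.subgroupOf (Subgroup.zpowers (a 0))) = ℓ
        set Q := ↥(Subgroup.zpowers (a 0)) ⧸ H.subgroupOf (Subgroup.zpowers (a 0)) with hQ
        set g : Q := QuotientGroup.mk ⟨a 0, Subgroup.mem_zpowers _⟩ with hg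
        have hgl : g ^ ℓ = 1 := by
          rw [hg, ← QuotientGroup.mk_pow, QuotientGroup.eq_one_iff, Subgroup.mem_subgroupOf]
          exact hPle ⟨a 0, rfl⟩
        have hgne : g ≠ 1 := by
          rw [hg, Ne, QuotientGroup.eq_one_iff, Subgroup.mem_subgroupOf]
          exact hmem
        have hord : orderOf g = ℓ := by
          rcases (Nat.Prime.eq_one_or_self_of_dvd hℓ _ (orderOf_dvd_of_pow_eq_one hgl)) with h | h
          · exact absurd (orderOf_eq_one_iff.mp h) hgne
          · exact h
        have htop : Subgroup.zpowers g = ⊤ := by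
          rw [Subgroup.eq_top_iff']
          intro q
          obtain ⟨x, rfl⟩ := QuotientGroup.mk_surjective q
          obtain ⟨k, hk⟩ := x.2
          refine ⟨k, ?_⟩
          show g ^ k = QuotientGroup.mk x
          rw [hg, ← QuotientGroup.mk_zpow]
          congr 1
          apply Subtype.ext
          simpa using hk
        calc Nat.card Q = Nat.card (⊤ : Subgroup Q) := (Subgroup.card_top).symm
        _ = Nat.card (Subgroup.zpowers g) := by rw [htop]
        _ = orderOf g := Nat.card_zpowers g
        _ = ℓ := hord
      have hidx : P.relIndex (Subgroup.closure (Set.range a) ⊔ P) = P.relIndex H * ℓ := by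
        rw [hHtot,
          ← Subgroup.relIndex_mul_relIndex P H (H ⊔ Subgroup.zpowers (a 0)) hPle le_sup_left,
          hidx1]
      refine ⟨?_, ?_, ?_⟩
      · rw [hEtop]
        exact FiniteDimensional.trans F (↥E) ↥(E⟮b 0⟯)
      · rw [hEtop, hidx, ← hdim, ← hfr]
        exact (Module.finrank_mul_finrank F (↥E) ↥(E⟮b 0⟯)).symm
      · intro x c hx hxc
        rw [hEtop, IntermediateField.mem_restrictScalars] at hx
        set x' : E⟮b 0⟯ := ⟨x, hx⟩ with hx'def
        have hcne : algebraMap F Ω ((c : F)) ≠ 0 := by simpa using c.ne_zero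
        have hxne : x ≠ 0 := by
          rintro rfl
          rw [zero_pow hℓ.ne_zero] at hxc
          exact hcne hxc.symm
        have hx'ne : x' ≠ 0 := by
          intro h
          apply hxne
          exact congrArg Subtype.val h
        set cE : E := algebraMap F E ((c : F)) with hcE
        have hx'pow : x' ^ ℓ = algebraMap E E⟮b 0⟯ cE := by
          apply (algebraMap E⟮b 0⟯ Ω).injective
          rw [map_pow]
          show x ^ ℓ = algebraMap E⟮b 0⟯ Ω (algebraMap E E⟮b 0⟯ cE)
          rw [← IsScalarTower.algebraMap_apply, hxc, hcE, ← IsScalarTower.algebraMap_apply]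
        set eqv := autEquivZmod hirr E⟮b 0⟯ hζE with heqv
        set σ : E⟮b 0⟯ ≃ₐ[E] E⟮b 0⟯ := eqv.symm (Multiplicative.ofAdd (1 : ZMod ℓ)) with hσdef
        have hσθ : σ θ = algebraMap E E⟮b 0⟯ (algebraMap F E ζ) * θ := by
          have h := autEquivZmod_symm_apply_natCast hirr E⟮b 0⟯ hθpow hζE 1
          rw [pow_one] at h
          rw [hσdef, heqv]
          rw [show ((1 : ℕ) : ZMod ℓ) = (1 : ZMod ℓ) from Nat.cast_one] at h
          rw [h, Algebra.smul_def]
        -- σ x' is x' times a root of unity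
        have hfix : ∀ τ : E⟮b 0⟯ ≃ₐ[E] E⟮b 0⟯, τ (x' ^ ℓ) = x' ^ ℓ := by
          intro τ
          rw [hx'pow, AlgEquiv.commutes]
        have hσx_pow : (σ x' / x') ^ ℓ = 1 := by
          rw [div_pow, ← map_pow, hfix σ, div_self (pow_ne_zero _ hx'ne)]
        obtain ⟨j, hj⟩ := aux_root_of_unity (F := E) hζE hσx_pow
        have hσx : σ x' = algebraMap E E⟮b 0⟯ ((algebraMap F E ζ) ^ j) * x' := by
          rw [← hj, div_mul_cancel₀ _ hx'ne]
        have hθne : θ ≠ 0 := by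
          intro h
          apply ha0Ene
          apply (algebraMap E E⟮b 0⟯).injective
          rw [map_zero, ← hθpow, h, zero_pow hℓ.ne_zero]
        set y : E⟮b 0⟯ := x' / θ ^ j with hydef
        have hζEne : algebraMap E E⟮b 0⟯ ((algebraMap F E ζ) ^ j) ≠ 0 := by
          simp only [Ne, _root_.map_eq_zero]
          exact pow_ne_zero _ (hζE.ne_zero hℓ.ne_zero)
        have hσθj : (σ θ) ^ j = algebraMap E E⟮b 0⟯ ((algebraMap F E ζ) ^ j) * θ ^ j := by
          rw [hσθ, mul_pow, map_pow]
        have hσy : σ y = y := by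
          rw [hydef, map_div₀, map_pow, hσθj, hσx, mul_div_mul_left _ _ hζEne]
        have hall : ∀ τ : E⟮b 0⟯ ≃ₐ[E] E⟮b 0⟯, τ y = y := by
          have hpowfix : ∀ k : ℕ, (σ ^ k) y = y := by
            intro k
            induction k with
            | zero => rfl
            | succ k ih => rw [pow_succ, AlgEquiv.mul_apply, hσy, ih]
          intro τ
          have hτ : τ = σ ^ ((Multiplicative.toAdd (eqv τ)).val) := by
            apply eqv.injective
            rw [map_pow, hσdef, MulEquiv.apply_symm_apply]
            rw [← ofAdd_nsmul]
            rw [nsmul_eq_mul, mul_one]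
            rw [ZMod.natCast_val, ZMod.cast_id]
            exact (ofAdd_toAdd (eqv τ)).symm
          rw [hτ]
          exact hpowfix _
        have hyE : ∃ e : E, algebraMap E E⟮b 0⟯ e = y := by
          have h1 : y ∈ IntermediateField.fixedField (⊤ : Subgroup (E⟮b 0⟯ ≃ₐ[E] E⟮b 0⟯)) := by
            rintro ⟨τ, -⟩
            exact hall τ
          have hbot : IntermediateField.fixedField (⊤ : Subgroup (E⟮b 0⟯ ≃ₐ[E] E⟮b 0⟯)) = ⊥ :=
            ((IsGalois.tfae (F := ↥E) (E := ↥(E⟮b 0⟯))).out 0 1).mp hgal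
          rw [hbot] at h1
          rwa [IntermediateField.mem_bot] at h1
        obtain ⟨e, he⟩ := hyE
        have hx'eq : x' = algebraMap E E⟮b 0⟯ e * θ ^ j := by
          rw [he, hydef, div_mul_cancel₀ _ (pow_ne_zero _ hθne)]
        have hepow : e ^ ℓ * a0E ^ j = cE := by
          apply (algebraMap E E⟮b 0⟯).injective
          rw [map_mul, map_pow, map_pow, ← hθpow, ← hx'pow, hx'eq, mul_pow, ← map_pow,
            ← pow_mul, ← pow_mul, mul_comm ℓ j]
        set d : Fˣ := c * ((a 0)⁻¹) ^ j with hd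
        have hcEΩ : algebraMap E Ω cE = algebraMap F Ω ((c : F)) :=
          (IsScalarTower.algebraMap_apply F E Ω _).symm
        have h1 : e ^ ℓ = cE * (a0E⁻¹) ^ j := by
          rw [inv_pow, ← div_eq_mul_inv]
          exact (eq_div_iff (pow_ne_zero j ha0Ene)).mpr hepow
        have hePowΩ : ((e : Ω)) ^ ℓ = algebraMap F Ω ((d : F)) := by
          rw [hcoe e, ← map_pow, h1, map_mul, map_pow, map_inv₀, ha0EΩ, hcEΩ, hd]
          simp [map_mul, map_pow, map_inv₀]
        have hdmem : d ∈ H := hcl (e : Ω) d e.2 hePowΩ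
        rw [hHtot]
        have hcd : c = d * (a 0) ^ j := by
          rw [hd, mul_assoc, inv_pow, inv_mul_cancel, mul_one]
        rw [hcd]
        exact Subgroup.mul_mem _ (Subgroup.mem_sup_left hdmem)
          (Subgroup.mem_sup_right (Subgroup.pow_mem _ (Subgroup.mem_zpowers _) j))

end Helpers

set_option maxHeartbeats 1000000 in
theorem rank_invariance_and_kummer_degree
    (K : Type*) [Field K] [NumberField K] (ℓ : ℕ) (hℓ : ℓ.Prime) (hodd : Odd ℓ)
    (hζ : ¬ ∃ x : K, IsPrimitiveRoot x ℓ)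
    (hdeg : Module.finrank K (cycField K ℓ) = ℓ - 1)
    (G : Subgroup Kˣ) (hFG : G.FG)
    (hTF : ∀ g ∈ G, g ≠ 1 → ¬ IsOfFinOrder g)
    (rℓ : ℕ)
    (hr : Nat.card (↥G ⧸ (powSubgroup K ℓ).subgroupOf G) = ℓ ^ rℓ) :
    Nat.card
      (↥(G.map (Units.map ((algebraMap K ↥(cycField K ℓ)).toMonoidHom))) ⧸
        (powSubgroup (↥(cycField K ℓ)) ℓ).subgroupOf
          (G.map (Units.map ((algebraMap K ↥(cycField K ℓ)).toMonoidHom)))) = ℓ ^ rℓ ∧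
    Module.finrank K ↥(cycKummerField K ℓ G) = ℓ ^ rℓ * (ℓ - 1) := by
  classical
  have hℓ0 : 0 < ℓ := hℓ.pos
  haveI : NeZero ℓ := ⟨hℓ.ne_zero⟩
  set AC := AlgebraicClosure K with hACdef
  set L := cycField K ℓ with hLdef
  -- a primitive root of unity in the algebraic closure
  have hcyc : IsCyclotomicExtension {ℓ} AC AC := inferInstance
  obtain ⟨ζA, hζA0⟩ := hcyc.exists_isPrimitiveRoot (Set.mem_singleton _) hℓ.ne_zero
  have hζA : IsPrimitiveRoot ζA ℓ := hζA0
  have hζAL : ζA ∈ L := subset_adjoin K _ hζA.pow_eq_one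
  set ζL : L := ⟨ζA, hζAL⟩ with hζLdef
  have hζL : IsPrimitiveRoot ζL ℓ := by
    constructor
    · exact Subtype.ext (by simpa using hζA.pow_eq_one)
    · intro l hl
      exact hζA.dvd_of_pow_eq_one l (by simpa using congrArg Subtype.val hl)
  haveI : FiniteDimensional K L := FiniteDimensional.of_finrank_pos
    (by rw [hdeg]; have := hℓ.two_le; omega)
  set φ : Kˣ →* Lˣ := Units.map ((algebraMap K L).toMonoidHom) with hφdef
  have hφinj : Function.Injective φ := Units.map_injective ((algebraMap K L).injective)
  -- the norm argument: `ℓ`-th powers in `L` which come from `K` are `ℓ`-th powers in `K`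
  have hcomap : (powSubgroup L ℓ).comap φ = powSubgroup K ℓ := by
    ext g
    simp only [Subgroup.mem_comap]
    constructor
    · rintro ⟨u, hu⟩
      set v : Kˣ := Units.map (Algebra.norm K (S := L)) u with hv
      have hval : ((v ^ ℓ : Kˣ) : K) = ((g ^ (ℓ - 1) : Kˣ) : K) := by
        rw [Units.val_pow_eq_pow_val, Units.val_pow_eq_pow_val]
        show (Algebra.norm K ((u : Lˣ) : L)) ^ ℓ = (g : K) ^ (ℓ - 1)
        rw [← map_pow]
        have hu' : ((u ^ ℓ : Lˣ) : L) = algebraMap K L (g : K) := by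
          rw [show u ^ ℓ = φ g from hu]; rfl
        rw [Units.val_pow_eq_pow_val] at hu'
        rw [hu', Algebra.norm_algebraMap, hdeg]
      have hvl : v ^ ℓ = g ^ (ℓ - 1) := Units.ext hval
      refine ⟨g * v⁻¹, ?_⟩
      show (g * v⁻¹) ^ ℓ = g
      have hpow : g ^ ℓ = g ^ (ℓ - 1) * g := by
        rw [← pow_succ]
        congr 1
        omega
      calc (g * v⁻¹) ^ ℓ = g ^ ℓ * (v ^ ℓ)⁻¹ := by rw [mul_pow, inv_pow]
      _ = (g ^ (ℓ - 1) * g) * (g ^ (ℓ - 1))⁻¹ := by rw [hvl, hpow]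
      _ = g := by group
    · rintro ⟨w, hw⟩
      refine ⟨φ w, ?_⟩
      show (φ w) ^ ℓ = φ g
      rw [← hw]
      exact (map_pow φ w ℓ).symm
  have hrel : (powSubgroup L ℓ).relIndex (G.map φ) = ℓ ^ rℓ := by
    rw [← Subgroup.relIndex_comap (powSubgroup (↥L) ℓ) φ G, hcomap]
    exact hr
  refine ⟨hrel, ?_⟩
  -- part 2
  obtain ⟨S, hSG⟩ := hFG
  set n := S.card with hn
  set e := S.equivFin with he
  set s : Fin n → Kˣ := fun i => ((e.symm i : S) : Kˣ) with hs
  have hrs : Set.range s = (S : Set Kˣ) := by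
    ext u
    constructor
    · rintro ⟨i, rfl⟩
      exact (e.symm i).2
    · intro hu
      exact ⟨e ⟨u, hu⟩, by simp [hs]⟩
  have hsG : ∀ i, s i ∈ G := by
    intro i
    rw [← hSG]
    exact Subgroup.subset_closure (e.symm i).2
  have hex : ∀ i, ∃ y : AC, y ^ ℓ = algebraMap K AC ((s i : K)) :=
    fun i => IsAlgClosed.exists_pow_nat_eq _ hℓ0
  choose bb hbb using hex
  set aL : Fin n → Lˣ := fun i => φ (s i) with haL
  have hbb' : ∀ i, bb i ^ ℓ = algebraMap L AC (((aL i : Lˣ) : L)) := by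
    intro i
    rw [hbb i]
    have : ((aL i : Lˣ) : L) = algebraMap K L ((s i : K)) := rfl
    rw [this, ← IsScalarTower.algebraMap_apply K L AC]
  obtain ⟨fd, hdim, hcl⟩ := kummer_induction hℓ hζL n aL bb hbb'
  have hclos : Subgroup.closure (Set.range aL) = G.map φ := by
    have h1 : Set.range aL = φ '' (Set.range s) := by
      rw [← Set.range_comp]
      rfl
    rw [h1, ← MonoidHom.map_closure, hrs, hSG]
  have hdim2 : Module.finrank L (adjoin L (Set.range bb)) = ℓ ^ rℓ := by
    rw [hdim, Subgroup.relIndex_sup_right, hclos]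
    exact hrel
  -- identify the cyclotomic-Kummer field
  have hfield : cycKummerField K ℓ G = restrictScalars K (adjoin L (Set.range bb)) := by
    rw [IntermediateField.restrictScalars_adjoin]
    unfold cycKummerField
    apply le_antisymm
    · rw [adjoin_le_iff]
      rintro x (hx1 | ⟨g, hgG, hgx⟩)
      · exact subset_adjoin K _ (Or.inl (subset_adjoin K _ hx1))
      · set R := adjoin K ((↑L : Set AC) ∪ Set.range bb) with hR
        have hGroot : G ≤ rootSubgroup ℓ R := by
          rw [← hSG, Subgroup.closure_le, ← hrs]
          rintro u ⟨i, rfl⟩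
          exact ⟨bb i, subset_adjoin K _ (Or.inr ⟨i, rfl⟩), hbb i⟩
        obtain ⟨y, hyR, hy⟩ := hGroot hgG
        have hgne : algebraMap K AC ((g : Kˣ) : K) ≠ 0 := by simpa using g.ne_zero
        have hyne : y ≠ 0 := by
          rintro rfl
          rw [zero_pow hℓ.ne_zero] at hy
          exact hgne hy.symm
        have hz : (x / y) ^ ℓ = 1 := by
          rw [div_pow, hgx, hy, div_self hgne]
        have hxyL : x / y ∈ L := subset_adjoin K _ hz
        rw [show x = x / y * y from (div_mul_cancel₀ x hyne).symm]
        exact R.mul_mem (subset_adjoin K _ (Or.inl hxyL)) hyR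
    · rw [adjoin_le_iff]
      rintro x (hxL | ⟨i, rfl⟩)
      · have hLsub : L ≤ cycKummerField K ℓ G := by
          rw [hLdef]
          exact IntermediateField.adjoin.mono K _ _ (fun z hz => Or.inl hz)
        exact hLsub hxL
      · exact subset_adjoin K _ (Or.inr ⟨s i, hsG i, hbb i⟩)
  rw [hfield]
  have hmul := Module.finrank_mul_finrank K (↥L) ↥(adjoin L (Set.range bb))
  rw [hdeg, hdim2] at hmul
  show Module.finrank K ↥(adjoin (↥L) (Set.range bb)) = ℓ ^ rℓ * (ℓ - 1)
  rw [← hmul, mul_comm]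
end

section
/- Let τ be a positive odd integer whose only prime factor is 3 (i.e., τ is a power of 3 greater than 1). Among squarefree integers δ ≡ 1 (mod 4) with μ(|δ|) = 1 and exactly two prime factors, the maximum of f_τ(δ) is 1/19, attained at δ = -15; consequently dens((-15)^τ)/A(τ) = 18/19 under Hooley's formula. -/
open ArithmeticFunction

private lemma prime_dvd_pow3 {k p : ℕ} (hk : 1 ≤ k) (hp : p.Prime) :
    p ∣ 3 ^ k ↔ p = 3 := by
  constructor
  · intro h
    exact (Nat.prime_dvd_prime_iff_eq hp Nat.prime_three).mp (hp.dvd_of_dvd_pow h)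
  · rintro rfl
    exact dvd_pow_self 3 (by omega)

private lemma artin_log_summable (k : ℕ) (hk : 1 ≤ k) :
    Summable fun p : Nat.Primes => Real.log
      (if (p : ℕ) ∣ 3^k then (1 - 1 / (((p:ℕ) : ℝ) - 1))
       else (1 - 1 / (((p:ℕ) : ℝ) * (((p:ℕ) : ℝ) - 1)))) := by
  have hmaj : Summable fun p : Nat.Primes => 7 / ((p : ℕ) : ℝ) ^ 2 := by
    have h0 : Summable fun n : ℕ => 7 / (n : ℝ) ^ 2 := by
      simpa [div_eq_mul_inv] using (Real.summable_one_div_nat_pow.mpr one_lt_two).mul_left 7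
    exact h0.comp_injective Nat.Primes.coe_nat_injective
  apply Summable.of_abs
  apply hmaj.of_nonneg_of_le (fun p => abs_nonneg _)
  intro p
  have hp := p.2
  have h2 : (2:ℝ) ≤ ((p:ℕ) : ℝ) := by exact_mod_cast hp.two_le
  by_cases h : (p:ℕ) ∣ 3^k
  · have h3 : (p:ℕ) = 3 := (prime_dvd_pow3 hk hp).mp h
    rw [if_pos h, h3]
    have h12 : (1 - 1/(((3:ℕ):ℝ)-1)) = 2⁻¹ := by norm_num
    rw [h12, Real.log_inv, abs_neg, abs_of_nonneg (Real.log_nonneg one_le_two)]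
    have := Real.log_two_lt_d9
    norm_num
    linarith
  · rw [if_neg h]
    set x : ℝ := ((p:ℕ):ℝ)
    have hx1 : (1:ℝ) < x * (x - 1) := by nlinarith
    have hgpos : (0:ℝ) < 1 - 1/(x*(x-1)) := by
      have := (div_lt_one (by linarith)).mpr hx1
      linarith
    have hle1 : 1 - 1/(x*(x-1)) ≤ 1 := by
      have : 0 < 1/(x*(x-1)) := by positivity
      linarith
    rw [abs_of_nonpos (Real.log_nonpos (le_of_lt hgpos) hle1)]
    have hlog : Real.log (1 - 1/(x*(x-1)))⁻¹ ≤ (1 - 1/(x*(x-1)))⁻¹ - 1 :=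
      Real.log_le_sub_one_of_pos (by positivity)
    rw [← Real.log_inv] at *
    have key : (1 - 1/(x*(x-1)))⁻¹ - 1 ≤ 7 / x^2 := by
      have hne : x*(x-1) - 1 > 0 := by linarith
      have e1 : (1 - 1/(x*(x-1)))⁻¹ - 1 = 1/(x*(x-1)-1) := by
        have hx0 : x - 1 ≠ 0 := by linarith
        have hx0' : x ≠ 0 := by linarith
        have hne' : x*(x-1) - 1 ≠ 0 := ne_of_gt hne
        field_simp
        ring
      rw [e1, div_le_div_iff₀ hne (by positivity)]
      nlinarith
    linarith

private lemma artin_factor_pos (k : ℕ) (hk : 1 ≤ k) (p : Nat.Primes) :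
    0 < (if (p : ℕ) ∣ 3^k then (1 - 1 / (((p:ℕ) : ℝ) - 1))
       else (1 - 1 / (((p:ℕ) : ℝ) * (((p:ℕ) : ℝ) - 1)))) := by
  have hp := p.2
  have h2 : (2:ℝ) ≤ ((p:ℕ) : ℝ) := by exact_mod_cast hp.two_le
  by_cases h : (p:ℕ) ∣ 3^k
  · have h3 : (p:ℕ) = 3 := (prime_dvd_pow3 hk hp).mp h
    rw [if_pos h, h3]
    norm_num
  · rw [if_neg h]
    have h1 : (1:ℝ) < ((p:ℕ):ℝ) * (((p:ℕ):ℝ) - 1) := by nlinarith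
    have := (div_lt_one (by linarith)).mpr h1
    linarith

private lemma artinA_pos_s18 (k : ℕ) (hk : 1 ≤ k) : 0 < artinA (3^k) := by
  have key := Real.rexp_tsum_eq_tprod
    (f := fun (p : Nat.Primes) =>
      (if (p : ℕ) ∣ 3^k then (1 - 1 / (((p:ℕ) : ℝ) - 1))
       else (1 - 1 / (((p:ℕ) : ℝ) * (((p:ℕ) : ℝ) - 1)))))
    (fun p => artin_factor_pos k hk p)
    (artin_log_summable k hk)
  have := key
  unfold artinA
  rw [← this]
  exact Real.exp_pos _

private lemma gbound {k ℓ : ℕ} (hk : 1 ≤ k) (hp : ℓ.Prime) (h2 : ℓ ≠ 2) (h3 : ℓ ≠ 3) :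
    0 < (if ℓ ∣ 3^k then 1 / ((ℓ : ℝ) - 2) else 1 / ((ℓ : ℝ) ^ 2 - ℓ - 1)) ∧
    (if ℓ ∣ 3^k then 1 / ((ℓ : ℝ) - 2) else 1 / ((ℓ : ℝ) ^ 2 - ℓ - 1)) ≤ 1 / 19 := by
  have h5 : 5 ≤ ℓ := by
    have := hp.two_le
    by_contra hc
    push_neg at hc
    interval_cases ℓ <;> simp_all (config := {decide := true})
  have hndvd : ¬ ℓ ∣ 3^k := fun h => h3 ((prime_dvd_pow3 hk hp).mp h)
  rw [if_neg hndvd]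
  have hr : (5:ℝ) ≤ (ℓ:ℝ) := by exact_mod_cast h5
  have hden : (19:ℝ) ≤ (ℓ:ℝ)^2 - ℓ - 1 := by nlinarith
  exact ⟨by positivity, by
    apply one_div_le_one_div_of_le (by norm_num) hden⟩

private lemma primeFactors15 : (15:ℕ).primeFactors = {3, 5} := by
  have : (15:ℕ) = 3 * 5 := by norm_num
  rw [this, Nat.Coprime.primeFactors_mul (by norm_num),
    Nat.Prime.primeFactors (by norm_num), Nat.Prime.primeFactors (by norm_num)]
  rfl

private lemma hooleyF_neg15 (k : ℕ) (hk : 1 ≤ k) : hooleyF (3^k) (-15) = 1 / 19 := by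
  unfold hooleyF
  have hna : (-15 : ℤ).natAbs = 15 := rfl
  rw [hna, primeFactors15, Finset.prod_pair (by norm_num)]
  rw [if_pos ((prime_dvd_pow3 hk Nat.prime_three).mpr rfl),
    if_neg (fun h => by simpa using (prime_dvd_pow3 hk (by norm_num)).mp h)]
  norm_num

private lemma moebius15 : moebius 15 = 1 := by
  have hsf : Squarefree (15:ℕ) := by
    have : (15:ℕ) = 3 * 5 := by norm_num
    rw [this, Nat.squarefree_mul (by norm_num)]
    exact ⟨(by norm_num : Nat.Prime 3).squarefree, (by norm_num : Nat.Prime 5).squarefree⟩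
  rw [ArithmeticFunction.moebius_apply_of_squarefree hsf]
  have : (15:ℕ) = 3 * 5 := by norm_num
  rw [this, ArithmeticFunction.cardFactors_mul (by norm_num) (by norm_num),
    ArithmeticFunction.cardFactors_apply_prime (by norm_num),
    ArithmeticFunction.cardFactors_apply_prime (by norm_num)]
  norm_num

theorem hooleyF_max_power_of_three (τ : ℕ) (k : ℕ) (hk : 1 ≤ k) (hτ : τ = 3 ^ k) :
    (∀ δ : ℤ, Squarefree δ → δ % 4 = 1 → moebius δ.natAbs = 1 →
      δ.natAbs.primeFactors.card = 2 → hooleyF τ δ ≤ 1 / 19) ∧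
    hooleyF τ (-15) = 1 / 19 ∧
    hooleyDens τ (-15) / artinA τ = 18 / 19 := by
  subst hτ
  refine ⟨?_, hooleyF_neg15 k hk, ?_⟩
  · intro δ hsf h4 hmu hcard
    obtain ⟨p, q, hpq, hset⟩ := Finset.card_eq_two.mp hcard
    have hpm : p ∈ δ.natAbs.primeFactors := by rw [hset]; simp
    have hqm : q ∈ δ.natAbs.primeFactors := by rw [hset]; simp
    have hp : p.Prime := Nat.prime_of_mem_primeFactors hpm
    have hq : q.Prime := Nat.prime_of_mem_primeFactors hqm
    have hodd : ¬ 2 ∣ δ.natAbs := by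
      rw [show (2:ℕ) = (2:ℤ).natAbs from rfl, Int.natAbs_dvd_natAbs]
      omega
    have hp2 : p ≠ 2 := fun h => hodd (h ▸ Nat.dvd_of_mem_primeFactors hpm)
    have hq2 : q ≠ 2 := fun h => hodd (h ▸ Nat.dvd_of_mem_primeFactors hqm)
    unfold hooleyF
    rw [hset, Finset.prod_pair hpq]
    rcases eq_or_ne p 3 with rfl | hp3
    · have hq3 : q ≠ 3 := fun h => hpq h.symm
      have hb := gbound hk hq hq2 hq3
      rw [if_pos ((prime_dvd_pow3 hk Nat.prime_three).mpr rfl),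
        show (1:ℝ)/(((3:ℕ):ℝ) - 2) = 1 by norm_num, one_mul]
      exact hb.2
    · rcases eq_or_ne q 3 with rfl | hq3
      · have hb := gbound hk hp hp2 hp3
        rw [if_pos ((prime_dvd_pow3 hk Nat.prime_three).mpr rfl),
          show (1:ℝ)/(((3:ℕ):ℝ) - 2) = 1 by norm_num, mul_one]
        exact hb.2
      · have hbp := gbound hk hp hp2 hp3
        have hbq := gbound hk hq hq2 hq3
        nlinarith [hbp.1, hbp.2, hbq.1, hbq.2]
  · unfold hooleyDens
    rw [if_pos (by decide)]
    have hna : (-15 : ℤ).natAbs = 15 := rfl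
    rw [hna, moebius15, hooleyF_neg15 k hk]
    have hA := artinA_pos_s18 k hk
    rw [mul_comm, mul_div_assoc, div_self hA.ne', mul_one]
    push_cast
    norm_num
end
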